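/- Let γ(t; a, b) = t^{a−1} e^{−t/b} / (Γ(a) b^{a}) for t > 0 denote the Gamma density with shape a > 0 and scale b > 0. Let K ≥ 1, m ≥ 1, and let (a_1, b_1), …, (a_K, b_K) be pairwise distinct pairs of positive reals. Then the product functions Φ_k : (0, ∞)^m → ℝ defined by Φ_k(t_1, …, t_m) = ∏_{j=1}^m γ(t_j; a_k, b_k), k = 1, …, K, are linearly independent over ℝ: if c_1, …, c_K ∈ ℝ satisfy ∑_{k=1}^K c_k Φ_k(t_1, …, t_m) = 0 for all (t_1, …, t_m) ∈ (0, ∞)^m, then c_1 = ⋯ = c_K = 0. -/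
import Mathlib


open Filter Topology

/-- The Gamma probability density with shape `a > 0` and scale `b > 0`:
`γ(t; a, b) = t^(a-1) e^(-t/b) / (Γ(a) bᵃ)` (real powers). -/
noncomputable def gammaPdf (a b t : ℝ) : ℝ :=
  t ^ (a - 1) * Real.exp (-t / b) / (Real.Gamma a * b ^ a)


lemma key {ι : Type*} [DecidableEq ι] :
    ∀ s : Finset ι, ∀ (α β : ι → ℝ),
    (∀ i ∈ s, ∀ j ∈ s, i ≠ j → (α i, β i) ≠ (α j, β j)) →
    ∀ c : ι → ℝ,
    (∀ t : ℝ, 0 < t → ∑ i ∈ s, c i * (t ^ (α i) * Real.exp (-(β i) * t)) = 0) →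
    ∀ i ∈ s, c i = 0 := by
  intro s
  induction s using Finset.strongInduction with
  | _ s ih =>
    intro α β hdist c hsum i hi
    have hne : s.Nonempty := ⟨i, hi⟩
    -- pick minimal β
    obtain ⟨i1, hi1, hmin⟩ := Finset.exists_min_image s β hne
    set s' := s.filter (fun j => β j = β i1) with hs'
    have hi1' : i1 ∈ s' := Finset.mem_filter.2 ⟨hi1, rfl⟩
    obtain ⟨i0, hi0', hmax⟩ := Finset.exists_max_image s' α ⟨i1, hi1'⟩
    have hi0 : i0 ∈ s := (Finset.mem_filter.1 hi0').1
    have hβ0 : β i0 = β i1 := (Finset.mem_filter.1 hi0').2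
    -- the rescaled sum
    have hg : ∀ t : ℝ, 0 < t →
        ∑ j ∈ s, c j * (t ^ (α j - α i0) * Real.exp (-(β j - β i0) * t)) = 0 := by
      intro t ht
      have : ∑ j ∈ s, c j * (t ^ (α j - α i0) * Real.exp (-(β j - β i0) * t))
          = (t ^ (-α i0) * Real.exp (β i0 * t)) *
            ∑ j ∈ s, c j * (t ^ (α j) * Real.exp (-(β j) * t)) := by
        rw [Finset.mul_sum]
        refine Finset.sum_congr rfl fun j hj => ?_
        rw [sub_eq_add_neg (α j), Real.rpow_add ht]
        rw [show -(β j - β i0) * t = -(β j) * t + β i0 * t by ring, Real.exp_add]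
        ring
      rw [this, hsum t ht, mul_zero]
    -- limit of each term
    have hterm : ∀ j ∈ s, Tendsto
        (fun t : ℝ => c j * (t ^ (α j - α i0) * Real.exp (-(β j - β i0) * t)))
        atTop (𝓝 (if j = i0 then c i0 else 0)) := by
      intro j hj
      by_cases hji : j = i0
      · subst hji
        simp only [sub_self, if_true]
        have : ∀ t : ℝ, 0 < t →
            c j * (t ^ (0:ℝ) * Real.exp (-(0:ℝ) * t)) = c j := by
          intro t ht; rw [Real.rpow_zero]; simp
        refine Tendsto.congr' ?_ tendsto_const_nhds
        filter_upwards [eventually_gt_atTop 0] with t ht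
        exact (this t ht).symm
      · rw [if_neg hji]
        rcases lt_or_eq_of_le (hmin j hj) with hlt | heq
        · -- β i0 = β i1 < β j : exponential decay wins
          rw [show (0:ℝ) = c j * 0 by ring]
          refine Tendsto.const_mul _ ?_
          have := tendsto_rpow_mul_exp_neg_mul_atTop_nhds_zero (α j - α i0)
            (β j - β i0) (by rw [hβ0]; linarith)
          exact this
        · -- β j = β i1 = β i0, so α j < α i0
          have hjβ : β j = β i0 := by rw [hβ0, ← heq]
          have hjs' : j ∈ s' := Finset.mem_filter.2 ⟨hj, by rw [← heq]⟩
          have hαlt : α j < α i0 := by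
            rcases lt_or_eq_of_le (hmax j hjs') with h | h
            · exact h
            · exact absurd (Prod.ext h hjβ) (hdist j hj i0 hi0 hji)
          have h1 : Tendsto (fun t : ℝ => t ^ (α j - α i0)) atTop (𝓝 0) := by
            have := tendsto_rpow_neg_atTop (y := α i0 - α j) (by linarith)
            simpa [neg_sub] using this
          rw [show (0:ℝ) = c j * (0 * Real.exp (-(β j - β i0) * 0)) by ring]
          rw [hjβ, sub_self]
          simp only [neg_zero, zero_mul, Real.exp_zero, mul_one]
          rw [show c j * 0 = c j * 0 by ring]
          exact (h1.const_mul (c j)).congr (fun t => by ring)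
    have hsumlim : Tendsto
        (fun t : ℝ => ∑ j ∈ s, c j * (t ^ (α j - α i0) * Real.exp (-(β j - β i0) * t)))
        atTop (𝓝 (∑ j ∈ s, if j = i0 then c i0 else 0)) :=
      tendsto_finset_sum _ hterm
    have hval : (∑ j ∈ s, if j = i0 then c i0 else 0) = c i0 := by
      rw [Finset.sum_ite_eq' s i0 (fun _ => c i0)]; simp [hi0]
    have hzero : Tendsto
        (fun t : ℝ => ∑ j ∈ s, c j * (t ^ (α j - α i0) * Real.exp (-(β j - β i0) * t)))
        atTop (𝓝 0) := by
      refine Tendsto.congr' ?_ tendsto_const_nhds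
      filter_upwards [eventually_gt_atTop 0] with t ht
      exact (hg t ht).symm
    have hc0 : c i0 = 0 := by
      rw [← hval]
      exact tendsto_nhds_unique hsumlim hzero
    -- now erase i0 and apply induction
    by_cases hii0 : i = i0
    · rw [hii0]; exact hc0
    · have hsub : s.erase i0 ⊂ s := Finset.erase_ssubset hi0
      refine ih (s.erase i0) hsub α β
        (fun p hp q hq => hdist p (Finset.mem_of_mem_erase hp) q (Finset.mem_of_mem_erase hq))
        c ?_ i (Finset.mem_erase.2 ⟨hii0, hi⟩)
      intro t ht
      have := hsum t ht
      rw [← Finset.add_sum_erase s _ hi0] at this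
      rw [hc0] at this
      simpa using this

/-- for pairwise distinct Gamma parameters, the product densities
`Φ_k(t_1, …, t_m) = ∏_{j=1}^m γ(t_j; a_k, b_k)` on `(0, ∞)^m` are linearly
independent over `ℝ`. -/
theorem stmt12 (K m : ℕ) (hK : 1 ≤ K) (hm : 1 ≤ m) (a b : Fin K → ℝ)
    (ha : ∀ k, 0 < a k) (hb : ∀ k, 0 < b k)
    (hdist : ∀ k l, k ≠ l → (a k, b k) ≠ (a l, b l)) :
    ∀ c : Fin K → ℝ,
      (∀ t : Fin m → ℝ, (∀ j, 0 < t j) →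
        ∑ k, c k * ∏ j, gammaPdf (a k) (b k) (t j) = 0) →
      ∀ k, c k = 0 := by
  intro c h k
  set α : Fin K → ℝ := fun k => (a k - 1) * m with hα
  set β : Fin K → ℝ := fun k => m / b k with hβ
  have hDpos : ∀ k, (0:ℝ) < (Real.Gamma (a k) * b k ^ (a k)) ^ m := fun k =>
    pow_pos (mul_pos (Real.Gamma_pos_of_pos (ha k)) (Real.rpow_pos_of_pos (hb k) _)) m
  set d : Fin K → ℝ := fun k => c k / (Real.Gamma (a k) * b k ^ (a k)) ^ m with hd
  have hm0 : (0:ℝ) < (m:ℝ) := by exact_mod_cast hm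
  have hdist' : ∀ p ∈ (Finset.univ : Finset (Fin K)), ∀ q ∈ Finset.univ,
      p ≠ q → (α p, β p) ≠ (α q, β q) := by
    intro p _ q _ hpq heq
    apply hdist p q hpq
    have h1 : α p = α q := congrArg Prod.fst heq
    have h2 : β p = β q := congrArg Prod.snd heq
    have hap : a p = a q := by
      have := mul_right_cancel₀ (ne_of_gt hm0) h1
      linarith
    have hbp : b p = b q := by
      rw [hβ, div_eq_div_iff (ne_of_gt (hb p)) (ne_of_gt (hb q))] at h2
      exact (mul_left_cancel₀ (ne_of_gt hm0) h2).symm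
    rw [hap, hbp]
  have hsum : ∀ t : ℝ, 0 < t →
      ∑ j ∈ (Finset.univ : Finset (Fin K)), d j * (t ^ (α j) * Real.exp (-(β j) * t)) = 0 := by
    intro t ht
    have h0 := h (fun _ => t) (fun _ => ht)
    rw [← h0]
    refine Finset.sum_congr rfl fun j _ => ?_
    have hprod : ∏ _i : Fin m, gammaPdf (a j) (b j) t = (gammaPdf (a j) (b j) t) ^ m := by
      rw [Finset.prod_const, Finset.card_univ, Fintype.card_fin]
    rw [hprod]
    unfold gammaPdf
    rw [div_pow, mul_pow]
    have h1 : (t ^ (a j - 1)) ^ m = t ^ (α j) := by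
      rw [hα, ← Real.rpow_natCast (t ^ (a j - 1)) m, ← Real.rpow_mul (le_of_lt ht)]
    have h2 : (Real.exp (-t / b j)) ^ m = Real.exp (-(β j) * t) := by
      rw [← Real.exp_nat_mul, hβ]
      congr 1
      field_simp
    rw [h1, h2, hd]
    field_simp
  have := key (Finset.univ : Finset (Fin K)) α β hdist' d hsum k (Finset.mem_univ k)
  rw [hd] at this
  have := div_eq_zero_iff.mp this
  rcases this with h' | h'
  · exact h'
  · exact absurd h' (ne_of_gt (hDpos k))
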